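/- The function ψ₀(r) = (1/2)( (1+r²)·log(1+r²)/r² − 1 ) satisfies H̃ ψ₀ = 0 on (0,∞), where H̃ f = -f'' - f'/r + (4/(r²(1+r²))) f. -/

import Mathlib

open Real

lemma onepos (s : ℝ) : (0:ℝ) < 1 + s ^ 2 := by positivity

lemma hpsi0 (s : ℝ) (hs : 0 < s) :
    HasDerivAt (fun s : ℝ => (1 / 2) * ((1 + s ^ 2) * Real.log (1 + s ^ 2) / s ^ 2 - 1))
      ((s ^ 2 - Real.log (1 + s ^ 2)) / s ^ 3) s := by
  have h1 : HasDerivAt (fun s : ℝ => 1 + s ^ 2) (2 * s) s := by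
    simpa using ((hasDerivAt_pow 2 s).const_add 1)
  have h2 : HasDerivAt (fun s : ℝ => Real.log (1 + s ^ 2)) (2 * s / (1 + s ^ 2)) s :=
    h1.log (ne_of_gt (onepos s))
  have hN := h1.mul h2
  have hden : HasDerivAt (fun s : ℝ => s ^ 2) (2 * s) s := by
    simpa using hasDerivAt_pow 2 s
  have hdiv := hN.div hden (by positivity : (s:ℝ) ^ 2 ≠ 0)
  have := (hdiv.sub_const 1).const_mul (1 / 2 : ℝ)
  refine this.congr_deriv ?_
  have h0 : (1 + s ^ 2) ≠ 0 := ne_of_gt (onepos s)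
  have hs0 : s ≠ 0 := ne_of_gt hs
  simp only [Pi.mul_apply]
  field_simp
  ring

lemma hd1 (s : ℝ) (hs : 0 < s) :
    HasDerivAt (fun s : ℝ => (s ^ 2 - Real.log (1 + s ^ 2)) / s ^ 3)
      (((2 * s - 2 * s / (1 + s ^ 2)) * s ^ 3 - (s ^ 2 - Real.log (1 + s ^ 2)) * (3 * s ^ 2))
        / (s ^ 3) ^ 2) s := by
  have h1 : HasDerivAt (fun s : ℝ => 1 + s ^ 2) (2 * s) s := by
    simpa using ((hasDerivAt_pow 2 s).const_add 1)
  have h2 : HasDerivAt (fun s : ℝ => Real.log (1 + s ^ 2)) (2 * s / (1 + s ^ 2)) s :=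
    h1.log (ne_of_gt (onepos s))
  have hsq : HasDerivAt (fun s : ℝ => s ^ 2) (2 * s) s := by
    simpa using hasDerivAt_pow 2 s
  have hnum := hsq.sub h2
  have hden : HasDerivAt (fun s : ℝ => s ^ 3) (3 * s ^ 2) s := by
    simpa using hasDerivAt_pow 3 s
  exact hnum.div hden (by positivity)

/-- `H̃ ψ₀ = 0` on `(0,∞)`, where `H̃ f = -f'' - f'/r + 4/(r²(1+r²)) f` and
`ψ₀(r) = (1/2)((1+r²) log(1+r²)/r² - 1)`. -/
theorem tildeH_psi0_eq_zero :
    ∀ r : ℝ, 0 < r →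
      -(deriv (deriv (fun s : ℝ =>
          (1 / 2) * ((1 + s ^ 2) * Real.log (1 + s ^ 2) / s ^ 2 - 1))) r)
        - deriv (fun s : ℝ =>
            (1 / 2) * ((1 + s ^ 2) * Real.log (1 + s ^ 2) / s ^ 2 - 1)) r / r
        + 4 / (r ^ 2 * (1 + r ^ 2)) *
          ((1 / 2) * ((1 + r ^ 2) * Real.log (1 + r ^ 2) / r ^ 2 - 1))
      = 0 := by
  intro r hr
  have hev : deriv (fun s : ℝ =>
      (1 / 2) * ((1 + s ^ 2) * Real.log (1 + s ^ 2) / s ^ 2 - 1))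
      =ᶠ[nhds r] fun s : ℝ => (s ^ 2 - Real.log (1 + s ^ 2)) / s ^ 3 := by
    filter_upwards [eventually_gt_nhds hr] with s hs
    exact (hpsi0 s hs).deriv
  have h2 : deriv (deriv (fun s : ℝ =>
      (1 / 2) * ((1 + s ^ 2) * Real.log (1 + s ^ 2) / s ^ 2 - 1))) r
      = ((2 * r - 2 * r / (1 + r ^ 2)) * r ^ 3 -
          (r ^ 2 - Real.log (1 + r ^ 2)) * (3 * r ^ 2)) / (r ^ 3) ^ 2 := by
    rw [hev.deriv_eq]
    exact (hd1 r hr).deriv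
  have h1 : deriv (fun s : ℝ =>
      (1 / 2) * ((1 + s ^ 2) * Real.log (1 + s ^ 2) / s ^ 2 - 1)) r
      = (r ^ 2 - Real.log (1 + r ^ 2)) / r ^ 3 := (hpsi0 r hr).deriv
  rw [h1, h2]
  have h0 : (1 + r ^ 2) ≠ 0 := ne_of_gt (onepos r)
  have hr0 : r ≠ 0 := ne_of_gt hr
  field_simp
  ring
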